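/- Let R^± = {X ∈ J^1 : tr(X)=0, X^{×2} = P^±}. Then: (a) R^+ is empty; (b) R^- = {rP^- + Q^+(x) : r ∈ ℝ, x ∈ O, n(x)=1}; consequently (c) P^+ and P^- lie in different F_{4(-20)}-orbits. -/

import Mathlib

noncomputable section
/-! ## The octonions, realized via the Cayley–Dickson construction on the quaternions -/

/-- The octonions `𝕆 = ℍ ⊕ ℍ`. -/
abbrev Oct : Type := Quaternion ℝ × Quaternion ℝ

/-- Octonion multiplication `(a,b)(c,d) = (ac - d̄b, da + bc̄)`. -/
def omul (x y : Oct) : Oct :=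
  (x.1 * y.1 - star y.2 * x.2, y.2 * x.1 + x.2 * star y.1)

/-- Octonion conjugation `x ↦ x̄`. -/
def oconj (x : Oct) : Oct := (star x.1, -x.2)

/-- The unit octonion `1`. -/
def oone : Oct := (1, 0)

/-- The real (scalar) part `Re(x)` of an octonion. -/
def oRe (x : Oct) : ℝ := x.1.re

/-- The standard inner product `(x|y)` on the octonions. -/
def oinner (x y : Oct) : ℝ := (x.1 * star y.1).re + (x.2 * star y.2).re

/-- The norm form `n(x) = (x|x)`. -/
def onorm (x : Oct) : ℝ := oinner x x

/-- The imaginary (vector) part `Im(x)` of an octonion. -/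
def oIm (x : Oct) : Oct := x - oRe x • oone

theorem oRe_add (x y : Oct) : oRe (x + y) = oRe x + oRe y := by
  simp [oRe]

theorem oRe_sub (x y : Oct) : oRe (x - y) = oRe x - oRe y := by
  simp [oRe]

theorem oRe_smul (c : ℝ) (x : Oct) : oRe (c • x) = c * oRe x := by
  simp [oRe]

theorem oRe_oone : oRe oone = 1 := by
  simp [oRe, oone] <;> rfl

/-- The space `Im 𝕆` of imaginary octonions. -/
def ImOct : Submodule ℝ Oct where
  carrier := {x | oRe x = 0}
  add_mem' := by
    intro a b ha hb
    simp only [Set.mem_setOf_eq] at *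
    rw [oRe_add, ha, hb, add_zero]
  zero_mem' := by
    show oRe 0 = 0
    simp [oRe] <;> rfl
  smul_mem' := by
    intro c x hx
    simp only [Set.mem_setOf_eq] at *
    rw [oRe_smul, hx, mul_zero]

theorem oIm_mem (z : Oct) : oIm z ∈ ImOct := by
  show oRe (oIm z) = 0
  show oRe (z - oRe z • oone) = 0
  rw [oRe_sub, oRe_smul, oRe_oone, mul_one, sub_self]

theorem oinner_oone (x : Oct) : oinner x oone = oRe x := by
  simp [oinner, oone, oRe] <;> rfl
/-! ## Small helper lemmas on the automorphism group of a module -/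

theorem le_mul_apply {M : Type*} [AddCommMonoid M] [Module ℝ M] (a b : M ≃ₗ[ℝ] M) (x : M) :
    (a * b) x = a (b x) := rfl

theorem le_one_apply {M : Type*} [AddCommMonoid M] [Module ℝ M] (x : M) :
    (1 : M ≃ₗ[ℝ] M) x = x := rfl

theorem le_apply_inv_apply {M : Type*} [AddCommMonoid M] [Module ℝ M] (a : M ≃ₗ[ℝ] M) (z : M) :
    a (a⁻¹ z) = z := by
  rw [← le_mul_apply, mul_inv_cancel, le_one_apply]

theorem le_inv_apply_apply {M : Type*} [AddCommMonoid M] [Module ℝ M] (a : M ≃ₗ[ℝ] M) (z : M) :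
    a⁻¹ (a z) = z := by
  rw [← le_mul_apply, inv_mul_cancel, le_one_apply]
/-! ## The exceptional Jordan algebra `J¹`

`J¹` is the real vector space `ℝ³ ⊕ 𝕆³`, whose element `((ξ₁,ξ₂,ξ₃),(x₁,x₂,x₃))`
represents the twisted-hermitian matrix `h¹(ξ₁,ξ₂,ξ₃; x₁,x₂,x₃)`, i.e.
`ξ₁E₁ + ξ₂E₂ + ξ₃E₃ + F¹₁(x₁) + F¹₂(x₂) + F¹₃(x₃)`. -/

abbrev J1 : Type := (ℝ × ℝ × ℝ) × (Oct × Oct × Oct)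

/-- `jmk a b c x y z = h¹(a,b,c;x,y,z)`. -/
def jmk (a b c : ℝ) (x y z : Oct) : J1 := ((a, b, c), (x, y, z))

def ja1 (X : J1) : ℝ := X.1.1
def ja2 (X : J1) : ℝ := X.1.2.1
def ja3 (X : J1) : ℝ := X.1.2.2
def jx1 (X : J1) : Oct := X.2.1
def jx2 (X : J1) : Oct := X.2.2.1
def jx3 (X : J1) : Oct := X.2.2.2

/-- The Jordan product `X ∘ Y = (XY + YX)/2` of `J¹`, written out in components
(obtained by multiplying the twisted-hermitian matrices `h¹(ξ;x)` and `h¹(η;y)`). -/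
def jmul (X Y : J1) : J1 :=
  jmk
    (ja1 X * ja1 Y - oinner (jx2 X) (jx2 Y) - oinner (jx3 X) (jx3 Y))
    (ja2 X * ja2 Y + oinner (jx1 X) (jx1 Y) - oinner (jx3 X) (jx3 Y))
    (ja3 X * ja3 Y + oinner (jx1 X) (jx1 Y) - oinner (jx2 X) (jx2 Y))
    ((2:ℝ)⁻¹ • ((ja2 X + ja3 X) • jx1 Y + (ja2 Y + ja3 Y) • jx1 X
      - (oconj (omul (jx2 Y) (jx3 X)) + oconj (omul (jx2 X) (jx3 Y)))))
    ((2:ℝ)⁻¹ • ((ja3 X + ja1 X) • jx2 Y + (ja3 Y + ja1 Y) • jx2 X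
      + (oconj (omul (jx3 Y) (jx1 X)) + oconj (omul (jx3 X) (jx1 Y)))))
    ((2:ℝ)⁻¹ • ((ja1 X + ja2 X) • jx3 Y + (ja1 Y + ja2 Y) • jx3 X
      + (oconj (omul (jx1 Y) (jx2 X)) + oconj (omul (jx1 X) (jx2 Y)))))

/-- The trace. -/
def jtr (X : J1) : ℝ := ja1 X + ja2 X + ja3 X

/-- The identity element `E`. -/
def jE : J1 := jmk 1 1 1 0 0 0

/-- The inner product `(X|Y) = tr(X ∘ Y)`. -/
def jinner (X Y : J1) : ℝ := jtr (jmul X Y)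

/-- Freudenthal's cross product
`X × Y = (2 X∘Y − tr(X)Y − tr(Y)X + (tr(X)tr(Y) − (X|Y))E)/2`. -/
def jcross (X Y : J1) : J1 :=
  (2:ℝ)⁻¹ • ((2:ℝ) • jmul X Y - jtr X • Y - jtr Y • X + (jtr X * jtr Y - jinner X Y) • jE)

/-- `X^{×2} = X × X`. -/
def jsq (X : J1) : J1 := jcross X X

/-- The determinant `det X = (X|X×X)/3`. -/
def jdet (X : J1) : ℝ := (3:ℝ)⁻¹ * jinner X (jcross X X)

/-- The characteristic polynomial `Φ_X(t) = det (tE − X)`. -/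
def charP (X : J1) (t : ℝ) : ℝ := jdet (t • jE - X)

/-- The quadratic form `Q(X) = −tr(X^{×2})`. -/
def Qform (X : J1) : ℝ := - jtr (jsq X)

/-- The diagonal matrix units. -/
def jE1 : J1 := jmk 1 0 0 0 0 0
def jE2 : J1 := jmk 0 1 0 0 0 0
def jE3 : J1 := jmk 0 0 1 0 0 0

/-- The off-diagonal elements `F¹ᵢ(x)`. -/
def jF1 (x : Oct) : J1 := jmk 0 0 0 x 0 0
def jF2 (x : Oct) : J1 := jmk 0 0 0 0 x 0
def jF3 (x : Oct) : J1 := jmk 0 0 0 0 0 x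

/-- `diag(a,b,c)`. -/
def jdiag (a b c : ℝ) : J1 := jmk a b c 0 0 0

/-- `P⁺ = h¹(1,−1,0;0,0,1)`. -/
def Pplus : J1 := jmk 1 (-1) 0 0 0 oone

/-- `P⁻ = h¹(−1,1,0;0,0,1)`. -/
def Pminus : J1 := jmk (-1) 1 0 0 0 oone

/-- `Q⁺(x) = h¹(0,0,0;x,x̄,0)`. -/
def Qplus (x : Oct) : J1 := jmk 0 0 0 x (oconj x) 0
/-! ## The exceptional Lie group `F₄₍₋₂₀₎` -/

/-- `F₄₍₋₂₀₎`, the automorphism group of the exceptional Jordan algebra `J¹`: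
`{g ∈ GL_ℝ(J¹) | g(X ∘ Y) = gX ∘ gY}`. -/
def F4 : Subgroup (J1 ≃ₗ[ℝ] J1) where
  carrier := {g | ∀ X Y : J1, g (jmul X Y) = jmul (g X) (g Y)}
  one_mem' := by
    intro X Y
    rfl
  mul_mem' := by
    intro a b ha hb
    have ha' : ∀ X Y : J1, a (jmul X Y) = jmul (a X) (a Y) := ha
    have hb' : ∀ X Y : J1, b (jmul X Y) = jmul (b X) (b Y) := hb
    intro X Y
    simp only [le_mul_apply]
    rw [hb', ha']
  inv_mem' := by
    intro a ha
    have ha' : ∀ X Y : J1, a (jmul X Y) = jmul (a X) (a Y) := ha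
    intro X Y
    apply a.injective
    rw [le_apply_inv_apply, ha', le_apply_inv_apply, le_apply_inv_apply]

/-- The (full) stabilizer subgroup of an element `v` inside `GL_ℝ(J¹)`;
`F4 ⊓ fixSubgroup v` is the stabilizer `(F₄₍₋₂₀₎)_v`, and intersections
`F4 ⊓ fixSubgroup v₁ ⊓ ⋯ ⊓ fixSubgroup vₙ` are pointwise stabilizers. -/
def fixSubgroup (v : J1) : Subgroup (J1 ≃ₗ[ℝ] J1) where
  carrier := {g | g v = v}
  one_mem' := by
    show (1 : J1 ≃ₗ[ℝ] J1) v = v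
    rfl
  mul_mem' := by
    intro a b ha hb
    have ha' : a v = v := ha
    have hb' : b v = v := hb
    show (a * b) v = v
    rw [le_mul_apply, hb', ha']
  inv_mem' := by
    intro a ha
    have ha' : a v = v := ha
    show a⁻¹ v = v
    conv_lhs => rw [← ha']
    rw [le_inv_apply_apply]

/-- The `F₄₍₋₂₀₎`-orbit of `v ∈ J¹`. -/
def orbF4 (v : J1) : Set J1 := {w | ∃ g ∈ F4, g v = w}

/-! ### Auxiliary octonion lemmas -/

theorem omul_oone' (x : Oct) : omul x oone = x := by
  simp [omul, oone]
theorem oone_omul' (x : Oct) : omul oone x = x := by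
  simp [omul, oone]
theorem omul_zero' (x : Oct) : omul x 0 = 0 := by
  simp [omul]
theorem zero_omul' (x : Oct) : omul 0 x = 0 := by
  simp [omul]
theorem oconj_oconj (x : Oct) : oconj (oconj x) = x := by
  simp [oconj]
theorem oconj_oone : oconj oone = oone := by
  simp [oconj, oone]
theorem oconj_zero : oconj 0 = 0 := by
  simp [oconj]
theorem oconj_add (x y : Oct) : oconj (x + y) = oconj x + oconj y := by
  simp [oconj, Prod.ext_iff]; abel
theorem oconj_smul' (r : ℝ) (x : Oct) : oconj (r • x) = r • oconj x := by
  simp [oconj]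
theorem omul_add' (x y z : Oct) : omul x (y + z) = omul x y + omul x z := by
  simp [omul, Prod.ext_iff]; constructor <;> noncomm_ring
theorem add_omul' (x y z : Oct) : omul (x + y) z = omul x z + omul y z := by
  simp [omul, Prod.ext_iff]; constructor <;> noncomm_ring
theorem omul_smul' (r : ℝ) (x y : Oct) : omul x (r • y) = r • omul x y := by
  simp [omul, Prod.smul_def, smul_sub, smul_add, mul_smul_comm, smul_mul_assoc]
theorem smul_omul' (r : ℝ) (x y : Oct) : omul (r • x) y = r • omul x y := by
  simp [omul, Prod.smul_def, smul_sub, smul_add, mul_smul_comm, smul_mul_assoc]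

open Quaternion in
theorem onorm_eq (x : Oct) : onorm x = normSq x.1 + normSq x.2 := by
  simp [onorm, oinner, normSq_def]

open Quaternion in
theorem osmul_one (r : ℝ) : r • (1:ℍ[ℝ]) = ((r:ℝ) : ℍ[ℝ]) := by
  rw [show ((1:ℍ[ℝ])) = (((1:ℝ)) : ℍ[ℝ]) from by norm_cast, Quaternion.smul_coe, mul_one]

open Quaternion in
theorem omul_oconj_self (x : Oct) : omul x (oconj x) = onorm x • oone := by
  simp [omul, oconj, oone, onorm_eq, Prod.ext_iff]
  rw [self_mul_star, star_mul_self, osmul_one]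
  push_cast
  ring

open Quaternion in
theorem oconj_omul_self (x : Oct) : omul (oconj x) x = onorm x • oone := by
  simp [omul, oconj, oone, onorm_eq, Prod.ext_iff]
  rw [star_mul_self, star_mul_self, osmul_one]
  push_cast
  ring

theorem oconj_omul_omul (x y : Oct) : omul (oconj x) (omul x y) = onorm x • y := by
  obtain ⟨A, B⟩ := x
  obtain ⟨C, D⟩ := y
  simp [omul, oconj, onorm_eq, Prod.ext_iff, Quaternion.ext_iff, Quaternion.re_mul,
    Quaternion.imI_mul, Quaternion.imJ_mul, Quaternion.imK_mul, Quaternion.normSq_def']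
  refine ⟨⟨?_,?_,?_,?_⟩,?_,?_,?_,?_⟩ <;> ring

theorem oRe_omul_assoc (x y z : Oct) :
    oRe (omul (omul x y) z) = oRe (omul x (omul y z)) := by
  obtain ⟨A, B⟩ := x
  obtain ⟨C, D⟩ := y
  obtain ⟨E, F⟩ := z
  simp [omul, oRe, Quaternion.re_mul, Quaternion.imI_mul, Quaternion.imJ_mul,
    Quaternion.imK_mul]
  ring

open Quaternion in
theorem onorm_oconj (x : Oct) : onorm (oconj x) = onorm x := by
  simp [onorm_eq, oconj, normSq_star, normSq_neg]

open Quaternion in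
theorem onorm_oone : onorm oone = 1 := by
  simp [onorm_eq, oone]

open Quaternion in
theorem onorm_osmul (r : ℝ) (x : Oct) : onorm (r • x) = r ^ 2 * onorm x := by
  simp [onorm_eq, Prod.smul_def, normSq_smul]; ring

open Quaternion in
theorem onorm_nonneg (x : Oct) : 0 ≤ onorm x := by
  rw [onorm_eq]
  exact add_nonneg normSq_nonneg normSq_nonneg

/-! ### Components of the cross square of a traceless element -/

theorem jsq_comp (a b c : ℝ) (x y z : Oct) (htr : a + b + c = 0) :
    jsq ((a, b, c), (x, y, z)) =
      ((b * c - onorm x, c * a + onorm y, a * b + onorm z),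
        ((-a) • x - oconj (omul y z), (-b) • y + oconj (omul z x),
          (-c) • z + oconj (omul x y))) := by
  have hc : c = -(a + b) := by linarith
  subst hc
  simp only [jsq, jcross, jmul, jinner, jtr, jE, jmk, ja1, ja2, ja3, jx1, jx2, jx3, onorm,
    Prod.smul_mk, Prod.mk_add_mk, Prod.mk_sub_mk, smul_eq_mul, Prod.mk.injEq]
  refine ⟨⟨by ring, by ring, by ring⟩, ?_, ?_, ?_⟩ <;> module

/-! ### The key computation -/

theorem key_lemma (a b c ε : ℝ) (x y z : Oct) (hε : ε = 1 ∨ ε = -1)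
    (htr : a + b + c = 0)
    (e1 : b * c - onorm x = ε) (e2 : c * a + onorm y = -ε)
    (e3 : a * b + onorm z = 0)
    (o1 : (-a) • x - oconj (omul y z) = 0)
    (o2 : (-b) • y + oconj (omul z x) = 0)
    (o3 : (-c) • z + oconj (omul x y) = oone) :
    b = -a ∧ c = 0 ∧ onorm x = -ε ∧ onorm y = -ε ∧
      omul x y = oone ∧ omul y z = (-a) • oconj x := by
  have hyz : omul y z = (-a) • oconj x := by
    have h := sub_eq_zero.mp o1
    have h' := congrArg oconj h.symm
    rwa [oconj_oconj, oconj_smul'] at h'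
  have hzx : omul z x = b • oconj y := by
    have h : oconj (omul z x) = b • y := by rw [neg_smul, neg_add_eq_zero] at o2; exact o2.symm
    have h' := congrArg oconj h
    rwa [oconj_oconj, oconj_smul'] at h'
  have hxy : omul x y = oone + c • oconj z := by
    have h : oconj (omul x y) = oone + c • z := by rw [← o3]; module
    have h' := congrArg oconj h
    rwa [oconj_oconj, oconj_add, oconj_oone, oconj_smul'] at h'
  have eqA : oRe z + c * onorm z = -a * onorm x := by
    have h := oRe_omul_assoc x y z
    rw [hxy, hyz, add_omul', oone_omul', smul_omul', oconj_omul_self, omul_smul',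
      omul_oconj_self] at h
    simp only [oRe_add, oRe_smul, oRe_oone] at h
    linarith
  have eqB : b * onorm y = oRe z + c * onorm z := by
    have h := oRe_omul_assoc z x y
    rw [hzx, hxy, smul_omul', oconj_omul_self, omul_add', omul_oone', omul_smul',
      omul_oconj_self] at h
    simp only [oRe_add, oRe_smul, oRe_oone] at h
    linarith
  have habε : (a + b) * ε = 0 := by
    linear_combination (-a) * e1 + b * e2 - eqA - eqB
  have hab : a + b = 0 := by
    rcases hε with h | h <;> subst h <;> linarith
  have hc : c = 0 := by linarith
  subst hc
  refine ⟨by linarith, rfl, by linarith, by linarith, ?_, hyz⟩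
  rw [hxy, zero_smul, add_zero]

/-! ### Parts (a) and (b) -/

theorem partA : {X : J1 | jtr X = 0 ∧ jsq X = Pplus} = (∅ : Set J1) := by
  ext X
  simp only [Set.mem_setOf_eq, Set.mem_empty_iff_false, iff_false, not_and]
  intro htr hsq
  obtain ⟨⟨a, b, c⟩, x, y, z⟩ := X
  have htr' : a + b + c = 0 := htr
  rw [jsq_comp a b c x y z htr'] at hsq
  simp only [Pplus, jmk, Prod.mk.injEq] at hsq
  obtain ⟨⟨e1, e2, e3⟩, o1, o2, o3⟩ := hsq
  obtain ⟨hb, hc, hx, -⟩ :=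
    key_lemma a b c 1 x y z (Or.inl rfl) htr' e1 e2 e3 o1 o2 o3
  have := onorm_nonneg x
  linarith

theorem partB : {X : J1 | jtr X = 0 ∧ jsq X = Pminus}
    = {Z : J1 | ∃ (r : ℝ) (x : Oct), onorm x = 1 ∧ Z = r • Pminus + Qplus x} := by
  ext Z
  simp only [Set.mem_setOf_eq]
  constructor
  · rintro ⟨htr, hsq⟩
    obtain ⟨⟨a, b, c⟩, x, y, z⟩ := Z
    have htr' : a + b + c = 0 := htr
    rw [jsq_comp a b c x y z htr'] at hsq
    simp only [Pminus, jmk, Prod.mk.injEq] at hsq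
    obtain ⟨⟨e1, e2, e3⟩, o1, o2, o3⟩ := hsq
    obtain ⟨hb, hc, hx, hy, hxy, hyz⟩ :=
      key_lemma a b c (-1) x y z (Or.inr rfl) htr' e1 (by linarith) e3 o1 o2 o3
    have hx1 : onorm x = 1 := by linarith
    have hy1 : onorm y = 1 := by linarith
    have hyx : y = oconj x := by
      have h := oconj_omul_omul x y
      rw [hxy, hx1, one_smul, omul_oone'] at h
      exact h.symm
    have hz : z = b • oone := by
      have h := oconj_omul_omul y z
      rw [hyz, hy1, one_smul, omul_smul', ← hyx, oconj_omul_self, hy1, one_smul] at h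
      rw [← h, hb]
    refine ⟨b, x, hx1, ?_⟩
    simp only [Pminus, Qplus, jmk, Prod.smul_mk, Prod.mk_add_mk, Prod.mk.injEq,
      smul_eq_mul, smul_zero, add_zero, zero_add]
    refine ⟨⟨by linarith, by linarith, by linarith⟩, trivial, hyx, hz⟩
  · rintro ⟨r, x, hx, rfl⟩
    have hZ : r • Pminus + Qplus x = (((-r : ℝ), r, 0), (x, oconj x, r • oone)) := by
      simp only [Pminus, Qplus, jmk, Prod.smul_mk, Prod.mk_add_mk, Prod.mk.injEq,
        smul_eq_mul, smul_zero, add_zero, zero_add]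
      norm_num
    rw [hZ]
    refine ⟨show (-r) + r + 0 = 0 by ring, ?_⟩
    rw [jsq_comp (-r) r 0 _ _ _ (by ring)]
    simp only [Pminus, jmk, Prod.mk.injEq]
    refine ⟨⟨by rw [hx]; ring, by rw [onorm_oconj, hx]; ring,
      by rw [onorm_osmul, onorm_oone]; ring⟩, ?_, ?_, ?_⟩
    · rw [omul_smul', omul_oone', oconj_smul', oconj_oconj, neg_neg]
      module
    · rw [smul_omul', oone_omul', oconj_smul']
      module
    · rw [omul_oconj_self, hx, one_smul, oconj_oone, neg_zero, zero_smul, zero_add]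

/-! ### Invariance of trace and cross product under `F₄₍₋₂₀₎` -/

theorem oinner_add_left (x y z : Oct) : oinner (x + y) z = oinner x z + oinner y z := by
  simp [oinner, add_mul]; ring
theorem oinner_add_right (x y z : Oct) : oinner x (y + z) = oinner x y + oinner x z := by
  simp [oinner, mul_add, star_add]; ring
theorem oinner_smul_left (r : ℝ) (x y : Oct) : oinner (r • x) y = r * oinner x y := by
  simp [oinner, Prod.smul_def, smul_mul_assoc, mul_add]
theorem oinner_smul_right (r : ℝ) (x y : Oct) : oinner x (r • y) = r * oinner x y := by
  simp [oinner, Prod.smul_def, mul_smul_comm, mul_add]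

theorem jmul_add_right (X Y Z : J1) : jmul X (Y + Z) = jmul X Y + jmul X Z := by
  obtain ⟨⟨a, b, c⟩, x, y, z⟩ := X
  obtain ⟨⟨a1, b1, c1⟩, x1, y1, z1⟩ := Y
  obtain ⟨⟨a2, b2, c2⟩, x2, y2, z2⟩ := Z
  simp only [Prod.mk_add_mk, jmul, jmk, ja1, ja2, ja3, jx1, jx2, jx3,
    oinner_add_right, omul_add', add_omul', oconj_add, Prod.mk.injEq]
  refine ⟨⟨by ring, by ring, by ring⟩, ?_, ?_, ?_⟩ <;> module

theorem jmul_smul_right (r : ℝ) (X Y : J1) : jmul X (r • Y) = r • jmul X Y := by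
  obtain ⟨⟨a, b, c⟩, x, y, z⟩ := X
  obtain ⟨⟨a1, b1, c1⟩, x1, y1, z1⟩ := Y
  simp only [Prod.smul_mk, jmul, jmk, ja1, ja2, ja3, jx1, jx2, jx3, smul_eq_mul,
    oinner_smul_right, omul_smul', smul_omul', oconj_smul', Prod.mk.injEq]
  refine ⟨⟨by ring, by ring, by ring⟩, ?_, ?_, ?_⟩ <;> module

theorem jmul_jE (X : J1) : jmul jE X = X := by
  obtain ⟨⟨a, b, c⟩, x, y, z⟩ := X
  simp only [jmul, jE, jmk, ja1, ja2, ja3, jx1, jx2, jx3, omul_zero', zero_omul',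
    oconj_zero, oinner, Prod.mk.injEq]
  norm_num [Prod.ext_iff, Prod.smul_def, Quaternion.re_zero]
  refine ⟨⟨?_, ?_⟩, ⟨?_, ?_⟩, ?_, ?_⟩ <;> module

theorem jE_jmul (X : J1) : jmul X jE = X := by
  obtain ⟨⟨a, b, c⟩, x, y, z⟩ := X
  simp only [jmul, jE, jmk, ja1, ja2, ja3, jx1, jx2, jx3, omul_zero', zero_omul',
    oconj_zero, oinner, Prod.mk.injEq]
  norm_num [Prod.ext_iff, Prod.smul_def, Quaternion.re_zero]
  refine ⟨⟨?_, ?_⟩, ⟨?_, ?_⟩, ?_, ?_⟩ <;> module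

/-- Jordan multiplication by `X`, as a linear map in the second argument. -/
def Lmul (X : J1) : J1 →ₗ[ℝ] J1 where
  toFun Y := jmul X Y
  map_add' Y Z := jmul_add_right X Y Z
  map_smul' r Y := jmul_smul_right r X Y

/-- Inclusions of the six coordinate blocks of `J¹`. -/
def iR1 : ℝ →ₗ[ℝ] J1 where
  toFun t := ((t, 0, 0), 0)
  map_add' s t := by simp [Prod.ext_iff]
  map_smul' r t := by simp [Prod.ext_iff]
def iR2 : ℝ →ₗ[ℝ] J1 where
  toFun t := ((0, t, 0), 0)
  map_add' s t := by simp [Prod.ext_iff]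
  map_smul' r t := by simp [Prod.ext_iff]
def iR3 : ℝ →ₗ[ℝ] J1 where
  toFun t := ((0, 0, t), 0)
  map_add' s t := by simp [Prod.ext_iff]
  map_smul' r t := by simp [Prod.ext_iff]
def iO1 : Oct →ₗ[ℝ] J1 where
  toFun w := (0, (w, 0, 0))
  map_add' s t := by simp [Prod.ext_iff]
  map_smul' r t := by simp [Prod.ext_iff]
def iO2 : Oct →ₗ[ℝ] J1 where
  toFun w := (0, (0, w, 0))
  map_add' s t := by simp [Prod.ext_iff]
  map_smul' r t := by simp [Prod.ext_iff]
def iO3 : Oct →ₗ[ℝ] J1 where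
  toFun w := (0, (0, 0, w))
  map_add' s t := by simp [Prod.ext_iff]
  map_smul' r t := by simp [Prod.ext_iff]

/-- Projections onto the six coordinate blocks of `J¹`. -/
def pR1 : J1 →ₗ[ℝ] ℝ where
  toFun X := X.1.1
  map_add' s t := rfl
  map_smul' r t := rfl
def pR2 : J1 →ₗ[ℝ] ℝ where
  toFun X := X.1.2.1
  map_add' s t := rfl
  map_smul' r t := rfl
def pR3 : J1 →ₗ[ℝ] ℝ where
  toFun X := X.1.2.2
  map_add' s t := rfl
  map_smul' r t := rfl
def pO1 : J1 →ₗ[ℝ] Oct where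
  toFun X := X.2.1
  map_add' s t := rfl
  map_smul' r t := rfl
def pO2 : J1 →ₗ[ℝ] Oct where
  toFun X := X.2.2.1
  map_add' s t := rfl
  map_smul' r t := rfl
def pO3 : J1 →ₗ[ℝ] Oct where
  toFun X := X.2.2.2
  map_add' s t := rfl
  map_smul' r t := rfl

theorem block_decomp :
    iR1 ∘ₗ pR1 + iR2 ∘ₗ pR2 + iR3 ∘ₗ pR3 + iO1 ∘ₗ pO1 + iO2 ∘ₗ pO2 + iO3 ∘ₗ pO3
      = (LinearMap.id : J1 →ₗ[ℝ] J1) := by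
  apply LinearMap.ext
  intro Z
  obtain ⟨⟨a, b, c⟩, x, y, z⟩ := Z
  simp [iR1, iR2, iR3, iO1, iO2, iO3, pR1, pR2, pR3, pO1, pO2, pO3, Prod.ext_iff]

theorem finrank_Oct : Module.finrank ℝ Oct = 8 := by
  rw [Module.finrank_prod, Quaternion.finrank_eq_four]

set_option maxHeartbeats 1000000 in
open LinearMap in
theorem trace_Lmul (X : J1) : trace ℝ J1 (Lmul X) = 9 * jtr X := by
  obtain ⟨⟨a, b, c⟩, x, y, z⟩ := X
  have h1 : pR1 ∘ₗ (Lmul (((a,b,c)),(x,y,z)) ∘ₗ iR1) = a • LinearMap.id := by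
    apply LinearMap.ext; intro t
    simp [pR1, iR1, Lmul, jmul, jmk, ja1, ja2, ja3, jx1, jx2, jx3, oinner, Quaternion.re_zero, Quaternion.imI_zero, Quaternion.imJ_zero, Quaternion.imK_zero]
  have h2 : pR2 ∘ₗ (Lmul (((a,b,c)),(x,y,z)) ∘ₗ iR2) = b • LinearMap.id := by
    apply LinearMap.ext; intro t
    simp [pR2, iR2, Lmul, jmul, jmk, ja1, ja2, ja3, jx1, jx2, jx3, oinner, Quaternion.re_zero, Quaternion.imI_zero, Quaternion.imJ_zero, Quaternion.imK_zero]
  have h3 : pR3 ∘ₗ (Lmul (((a,b,c)),(x,y,z)) ∘ₗ iR3) = c • LinearMap.id := by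
    apply LinearMap.ext; intro t
    simp [pR3, iR3, Lmul, jmul, jmk, ja1, ja2, ja3, jx1, jx2, jx3, oinner, Quaternion.re_zero, Quaternion.imI_zero, Quaternion.imJ_zero, Quaternion.imK_zero]
  have h4 : pO1 ∘ₗ (Lmul (((a,b,c)),(x,y,z)) ∘ₗ iO1) = ((2:ℝ)⁻¹ * (b + c)) • LinearMap.id := by
    apply LinearMap.ext; intro w
    simp only [LinearMap.comp_apply, LinearMap.smul_apply, LinearMap.id_apply, pO1, iO1, Lmul,
      jmul, jmk, ja1, ja2, ja3, jx1, jx2, jx3, LinearMap.coe_mk, AddHom.coe_mk,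
      omul_zero', zero_omul', oconj_zero, add_zero, zero_add, Prod.fst_zero, Prod.snd_zero]
    module
  have h5 : pO2 ∘ₗ (Lmul (((a,b,c)),(x,y,z)) ∘ₗ iO2) = ((2:ℝ)⁻¹ * (c + a)) • LinearMap.id := by
    apply LinearMap.ext; intro w
    simp only [LinearMap.comp_apply, LinearMap.smul_apply, LinearMap.id_apply, pO2, iO2, Lmul,
      jmul, jmk, ja1, ja2, ja3, jx1, jx2, jx3, LinearMap.coe_mk, AddHom.coe_mk,
      omul_zero', zero_omul', oconj_zero, add_zero, zero_add, Prod.fst_zero, Prod.snd_zero]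
    module
  have h6 : pO3 ∘ₗ (Lmul (((a,b,c)),(x,y,z)) ∘ₗ iO3) = ((2:ℝ)⁻¹ * (a + b)) • LinearMap.id := by
    apply LinearMap.ext; intro w
    simp only [LinearMap.comp_apply, LinearMap.smul_apply, LinearMap.id_apply, pO3, iO3, Lmul,
      jmul, jmk, ja1, ja2, ja3, jx1, jx2, jx3, LinearMap.coe_mk, AddHom.coe_mk,
      omul_zero', zero_omul', oconj_zero, add_zero, zero_add, Prod.fst_zero, Prod.snd_zero]
    module
  set L := Lmul ((a,b,c),(x,y,z)) with hL
  have t1 : trace ℝ J1 (L ∘ₗ (iR1 ∘ₗ pR1)) = a := by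
    rw [show L ∘ₗ (iR1 ∘ₗ pR1) = (L ∘ₗ iR1) ∘ₗ pR1 from rfl,
      trace_comp_comm' pR1 (L ∘ₗ iR1), h1, map_smul, trace_id, Module.finrank_self]
    simp
  have t2 : trace ℝ J1 (L ∘ₗ (iR2 ∘ₗ pR2)) = b := by
    rw [show L ∘ₗ (iR2 ∘ₗ pR2) = (L ∘ₗ iR2) ∘ₗ pR2 from rfl,
      trace_comp_comm' pR2 (L ∘ₗ iR2), h2, map_smul, trace_id, Module.finrank_self]
    simp
  have t3 : trace ℝ J1 (L ∘ₗ (iR3 ∘ₗ pR3)) = c := by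
    rw [show L ∘ₗ (iR3 ∘ₗ pR3) = (L ∘ₗ iR3) ∘ₗ pR3 from rfl,
      trace_comp_comm' pR3 (L ∘ₗ iR3), h3, map_smul, trace_id, Module.finrank_self]
    simp
  have t4 : trace ℝ J1 (L ∘ₗ (iO1 ∘ₗ pO1)) = 4 * (b + c) := by
    rw [show L ∘ₗ (iO1 ∘ₗ pO1) = (L ∘ₗ iO1) ∘ₗ pO1 from rfl,
      trace_comp_comm' pO1 (L ∘ₗ iO1), h4, map_smul, trace_id, finrank_Oct]
    simp only [smul_eq_mul]
    push_cast
    ring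
  have t5 : trace ℝ J1 (L ∘ₗ (iO2 ∘ₗ pO2)) = 4 * (c + a) := by
    rw [show L ∘ₗ (iO2 ∘ₗ pO2) = (L ∘ₗ iO2) ∘ₗ pO2 from rfl,
      trace_comp_comm' pO2 (L ∘ₗ iO2), h5, map_smul, trace_id, finrank_Oct]
    simp only [smul_eq_mul]
    push_cast
    ring
  have t6 : trace ℝ J1 (L ∘ₗ (iO3 ∘ₗ pO3)) = 4 * (a + b) := by
    rw [show L ∘ₗ (iO3 ∘ₗ pO3) = (L ∘ₗ iO3) ∘ₗ pO3 from rfl,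
      trace_comp_comm' pO3 (L ∘ₗ iO3), h6, map_smul, trace_id, finrank_Oct]
    simp only [smul_eq_mul]
    push_cast
    ring
  have hsum : trace ℝ J1 L = trace ℝ J1 (L ∘ₗ
      (iR1 ∘ₗ pR1 + iR2 ∘ₗ pR2 + iR3 ∘ₗ pR3 + iO1 ∘ₗ pO1 + iO2 ∘ₗ pO2 + iO3 ∘ₗ pO3)) := by
    rw [block_decomp, LinearMap.comp_id]
  rw [hsum]
  simp only [LinearMap.comp_add, map_add]
  rw [t1, t2, t3, t4, t5, t6]
  show _ = 9 * (a + b + c)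
  ring

theorem F4_jE (g : J1 ≃ₗ[ℝ] J1) (hg : g ∈ F4) : g jE = jE := by
  have hg' : ∀ X Y : J1, g (jmul X Y) = jmul (g X) (g Y) := hg
  have h : ∀ Y : J1, jmul (g jE) Y = Y := by
    intro Y
    have h0 := hg' jE (g.symm Y)
    rw [jmul_jE, g.apply_symm_apply] at h0
    exact h0.symm
  have h1 := h jE
  rwa [jE_jmul] at h1

open LinearMap in
theorem F4_jtr (g : J1 ≃ₗ[ℝ] J1) (hg : g ∈ F4) (X : J1) : jtr (g X) = jtr X := by
  have hg' : ∀ X Y : J1, g (jmul X Y) = jmul (g X) (g Y) := hg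
  have hc : Lmul (g X) = (g.conj (Lmul X) : J1 →ₗ[ℝ] J1) := by
    apply LinearMap.ext
    intro Y
    show jmul (g X) Y = g (jmul X (g.symm Y))
    rw [hg', g.apply_symm_apply]
  have htr := LinearMap.trace_conj' (Lmul X) g
  rw [← hc, trace_Lmul, trace_Lmul] at htr
  linarith

theorem F4_jsq (g : J1 ≃ₗ[ℝ] J1) (hg : g ∈ F4) (X : J1) : jsq (g X) = g (jsq X) := by
  have hg' : ∀ X Y : J1, g (jmul X Y) = jmul (g X) (g Y) := hg
  have e1 : jmul (g X) (g X) = g (jmul X X) := (hg' X X).symm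
  have e2 : jtr (g X) = jtr X := F4_jtr g hg X
  have e3 : jinner (g X) (g X) = jinner X X := by
    rw [jinner, e1, F4_jtr g hg, jinner]
  rw [jsq, jsq, jcross, jcross, e1, e2, e3]
  simp only [map_smul, map_add, map_sub]
  rw [F4_jE g hg]

theorem partC : orbF4 Pplus ≠ orbF4 Pminus := by
  intro hEq
  have hPm : Pminus ∈ orbF4 Pplus := by
    rw [hEq]
    exact ⟨1, F4.one_mem, rfl⟩
  obtain ⟨g, hg, hgP⟩ := hPm
  have hginv : g⁻¹ ∈ F4 := inv_mem hg
  have hmem : (0:ℝ) • Pminus + Qplus oone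
      ∈ {Z : J1 | ∃ (r : ℝ) (x : Oct), onorm x = 1 ∧ Z = r • Pminus + Qplus x} :=
    ⟨0, oone, onorm_oone, rfl⟩
  rw [← partB] at hmem
  obtain ⟨ht0, hs0⟩ := hmem
  have h1 : jtr ((g⁻¹ : J1 ≃ₗ[ℝ] J1) ((0:ℝ) • Pminus + Qplus oone)) = 0 := by
    rw [F4_jtr g⁻¹ hginv, ht0]
  have h2 : jsq ((g⁻¹ : J1 ≃ₗ[ℝ] J1) ((0:ℝ) • Pminus + Qplus oone)) = Pplus := by
    rw [F4_jsq g⁻¹ hginv, hs0, ← hgP, le_inv_apply_apply]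
  have hmem2 : (g⁻¹ : J1 ≃ₗ[ℝ] J1) ((0:ℝ) • Pminus + Qplus oone)
      ∈ {X : J1 | jtr X = 0 ∧ jsq X = Pplus} := ⟨h1, h2⟩
  rw [partA] at hmem2
  exact hmem2

/-- **Lemma (cce-12).** With `R^± = {X ∈ J¹ | tr X = 0, X^{×2} = P^±}`:
(a) `R⁺ = ∅`; (b) `R⁻ = {rP⁻ + Q⁺(x) | r ∈ ℝ, n(x) = 1}`;
(c) consequently `P⁺` and `P⁻` lie in different `F₄₍₋₂₀₎`-orbits. -/
theorem stmt_15 :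
    {X : J1 | jtr X = 0 ∧ jsq X = Pplus} = (∅ : Set J1) ∧
    {X : J1 | jtr X = 0 ∧ jsq X = Pminus}
      = {Z : J1 | ∃ (r : ℝ) (x : Oct), onorm x = 1 ∧ Z = r • Pminus + Qplus x} ∧
    orbF4 Pplus ≠ orbF4 Pminus := by
  exact ⟨partA, partB, partC⟩
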